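/- Let Y ∈ ℝ^{n×q}, X = [X₁, …, X_K] with X_k ∈ ℝ^{n×p_k}, B*, B̂ ∈ ℝ^{p×q} with row-blocks B*_k, B̂_k ∈ ℝ^{p_k×q}, E = Y − XB*, Δ_k = B̂_k − B*_k, σ*² = ‖Y − XB*‖_F²/(nq), σ̂² = ‖Y − XB̂‖_F²/(nq), and let λ > 0, t > 0, η > 0, w_k > 0. If (i) d₁(X_kᵀE) ≤ nq t λ w_k/(1+η) for all k, and (ii) d₁(X_kᵀ(Y − XB̂)) ≤ λ t n q w_k for all k, then −((2+η)/(1+η)) t λ Σ_k w_k‖Δ_k‖_* ≤ σ*² − σ̂² ≤ (2tλ/(1+η)) Σ_k w_k‖Δ_k‖_*. -/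

import Mathlib

open Matrix

noncomputable def frobInner {m n : ℕ} (A B : Matrix (Fin m) (Fin n) ℝ) : ℝ := (Aᵀ * B).trace

noncomputable def frobNorm {m n : ℕ} (A : Matrix (Fin m) (Fin n) ℝ) : ℝ := Real.sqrt (Aᵀ * A).trace

noncomputable def nucNorm {m n : ℕ} (A : Matrix (Fin m) (Fin n) ℝ) : ℝ :=
  ((Matrix.posSemidef_conjTranspose_mul_self A).1.eigenvectorUnitary.1 *
    Matrix.diagonal ((RCLike.ofReal : ℝ → ℝ) ∘ (√·) ∘ (Matrix.posSemidef_conjTranspose_mul_self A).1.eigenvalues) *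
    (star (Matrix.posSemidef_conjTranspose_mul_self A).1.eigenvectorUnitary : Matrix (Fin n) (Fin n) ℝ)).trace

noncomputable def opNorm {m n : ℕ} (A : Matrix (Fin m) (Fin n) ℝ) : ℝ :=
  ‖LinearMap.toContinuousLinearMap (Matrix.toEuclideanLin A)‖

lemma norm_mulVec_le {m q : ℕ} (A : Matrix (Fin m) (Fin q) ℝ) (x : EuclideanSpace ℝ (Fin q)) :
    ‖(WithLp.equiv 2 (Fin m → ℝ)).symm (A *ᵥ (WithLp.equiv 2 (Fin q → ℝ)) x)‖ ≤ opNorm A * ‖x‖ := by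
  have h := (LinearMap.toContinuousLinearMap (Matrix.toEuclideanLin A)).le_opNorm x
  simpa [opNorm, Matrix.toEuclideanLin_apply] using h

lemma dot_eq_inner {m : ℕ} (a b : Fin m → ℝ) :
    a ⬝ᵥ b = inner ℝ ((WithLp.equiv 2 (Fin m → ℝ)).symm a) ((WithLp.equiv 2 (Fin m → ℝ)).symm b) := by
  simp [PiLp.inner_apply, dotProduct, RCLike.inner_apply, mul_comm]

lemma frobInner_le_opNorm_mul_nucNorm {m q : ℕ} (M D : Matrix (Fin m) (Fin q) ℝ) :
    frobInner M D ≤ opNorm M * nucNorm D := by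
  classical
  set hH : (Dᴴ * D).IsHermitian := (Matrix.posSemidef_conjTranspose_mul_self D).1 with hHdef
  set U : Matrix (Fin q) (Fin q) ℝ := (hH.eigenvectorUnitary : Matrix (Fin q) (Fin q) ℝ) with hUdef
  have hUUt : U * Uᵀ = 1 := by
    have h := Matrix.mem_unitaryGroup_iff.mp hH.eigenvectorUnitary.2
    simp only [Matrix.star_eq_conjTranspose, Matrix.conjTranspose_eq_transpose_of_trivial] at h
    exact h
  have hnuc : nucNorm D = ∑ i, Real.sqrt (hH.eigenvalues i) := by
    unfold nucNorm
    rw [Matrix.trace_mul_cycle,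
      Unitary.coe_star_mul_self, Matrix.one_mul, Matrix.trace_diagonal]
    simp [Function.comp]
  have hMU : ((M * U)ᵀ * (D * U)).trace = frobInner M D := by
    show _ = (Mᵀ * D).trace
    rw [Matrix.transpose_mul, Matrix.trace_mul_comm, Matrix.mul_assoc,
      ← Matrix.mul_assoc U, hUUt, Matrix.one_mul, Matrix.trace_mul_comm]
  have hexp : ((M * U)ᵀ * (D * U)).trace
      = ∑ i, (M *ᵥ (WithLp.equiv 2 (Fin q → ℝ)) (hH.eigenvectorBasis i)) ⬝ᵥ
          (D *ᵥ (WithLp.equiv 2 (Fin q → ℝ)) (hH.eigenvectorBasis i)) := by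
    simp only [Matrix.trace, Matrix.diag, Matrix.mul_apply, Matrix.mulVec, dotProduct,
      Matrix.transpose_apply]
    rfl
  have hterm : ∀ i, (M *ᵥ (WithLp.equiv 2 (Fin q → ℝ)) (hH.eigenvectorBasis i)) ⬝ᵥ
          (D *ᵥ (WithLp.equiv 2 (Fin q → ℝ)) (hH.eigenvectorBasis i))
        ≤ opNorm M * Real.sqrt (hH.eigenvalues i) := by
    intro i
    set v : EuclideanSpace ℝ (Fin q) := hH.eigenvectorBasis i with hv
    set x : Fin q → ℝ := (WithLp.equiv 2 (Fin q → ℝ)) v with hx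
    have hvnorm : ‖v‖ = 1 := hH.eigenvectorBasis.orthonormal.1 i
    set a : EuclideanSpace ℝ (Fin m) := (WithLp.equiv 2 (Fin m → ℝ)).symm (M *ᵥ x) with ha
    set b : EuclideanSpace ℝ (Fin m) := (WithLp.equiv 2 (Fin m → ℝ)).symm (D *ᵥ x) with hb
    have hxx : x ⬝ᵥ x = 1 := by
      rw [dot_eq_inner]
      have hvx : ((WithLp.equiv 2 (Fin q → ℝ)).symm x) = v := by simp [hx]
      rw [hvx, real_inner_self_eq_norm_sq, hvnorm]; norm_num
    have hbb : (D *ᵥ x) ⬝ᵥ (D *ᵥ x) = hH.eigenvalues i := by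
      rw [Matrix.dotProduct_mulVec, ← Matrix.mulVec_transpose, Matrix.mulVec_mulVec,
        ← Matrix.conjTranspose_eq_transpose_of_trivial, dotProduct_comm]
      have hev : (Dᴴ * D) *ᵥ x = hH.eigenvalues i • x := hH.mulVec_eigenvectorBasis i
      rw [hev, dotProduct_smul, smul_eq_mul, hxx, mul_one]
    have hna : ‖a‖ ≤ opNorm M := by
      have := norm_mulVec_le M v
      rwa [hvnorm, mul_one] at this
    have hnb : ‖b‖ = Real.sqrt (hH.eigenvalues i) := by
      have h2 : ‖b‖ ^ 2 = hH.eigenvalues i := by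
        rw [← real_inner_self_eq_norm_sq, ← dot_eq_inner]; exact hbb
      rw [← h2, Real.sqrt_sq (norm_nonneg _)]
    calc (M *ᵥ x) ⬝ᵥ (D *ᵥ x) = inner ℝ a b := dot_eq_inner _ _
      _ ≤ ‖a‖ * ‖b‖ := real_inner_le_norm a b
      _ ≤ opNorm M * Real.sqrt (hH.eigenvalues i) := by
          rw [hnb]; exact mul_le_mul_of_nonneg_right hna (Real.sqrt_nonneg _)
  rw [← hMU, hexp, hnuc, Finset.mul_sum]
  exact Finset.sum_le_sum fun i _ => hterm i

lemma nucNorm_nonneg {m q : ℕ} (D : Matrix (Fin m) (Fin q) ℝ) : 0 ≤ nucNorm D := by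
  classical
  set hH : (Dᴴ * D).IsHermitian := (Matrix.posSemidef_conjTranspose_mul_self D).1
  have hnuc : nucNorm D = ∑ i, Real.sqrt (hH.eigenvalues i) := by
    unfold nucNorm
    rw [Matrix.trace_mul_cycle,
      Unitary.coe_star_mul_self, Matrix.one_mul, Matrix.trace_diagonal]
    simp [Function.comp]
  rw [hnuc]
  exact Finset.sum_nonneg fun i _ => Real.sqrt_nonneg _

lemma neg_bound {m q : ℕ} (M D : Matrix (Fin m) (Fin q) ℝ) :
    -(opNorm M * nucNorm D) ≤ frobInner M D := by
  have h := frobInner_le_opNorm_mul_nucNorm (-M) D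
  have h1 : frobInner (-M) D = -frobInner M D := by
    show ((-M)ᵀ * D).trace = -(Mᵀ * D).trace
    rw [Matrix.transpose_neg, Matrix.neg_mul, Matrix.trace_neg]
  have h2 : opNorm (-M) = opNorm M := by
    show ‖LinearMap.toContinuousLinearMap (Matrix.toEuclideanLin (-M))‖ = _
    rw [map_neg, map_neg, norm_neg]; rfl
  rw [h1, h2] at h
  linarith

lemma frobInner_self_nonneg {m q : ℕ} (S : Matrix (Fin m) (Fin q) ℝ) : 0 ≤ frobInner S S := by
  show 0 ≤ (Sᵀ * S).trace
  rw [Matrix.trace]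
  refine Finset.sum_nonneg fun i _ => ?_
  rw [Matrix.diag_apply, Matrix.mul_apply]
  exact Finset.sum_nonneg fun j _ => by rw [Matrix.transpose_apply]; exact mul_self_nonneg _

lemma frobInner_sub_right {m q : ℕ} (A B C : Matrix (Fin m) (Fin q) ℝ) :
    frobInner A (B - C) = frobInner A B - frobInner A C := by
  show (Aᵀ * (B - C)).trace = (Aᵀ * B).trace - (Aᵀ * C).trace
  rw [Matrix.mul_sub, Matrix.trace_sub]

lemma frobInner_sub_left {m q : ℕ} (A B C : Matrix (Fin m) (Fin q) ℝ) :
    frobInner (A - B) C = frobInner A C - frobInner B C := by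
  show ((A - B)ᵀ * C).trace = (Aᵀ * C).trace - (Bᵀ * C).trace
  rw [Matrix.transpose_sub, Matrix.sub_mul, Matrix.trace_sub]

lemma frobInner_comm {m q : ℕ} (A B : Matrix (Fin m) (Fin q) ℝ) :
    frobInner A B = frobInner B A := by
  show (Aᵀ * B).trace = (Bᵀ * A).trace
  rw [← Matrix.trace_transpose, Matrix.transpose_mul, Matrix.transpose_transpose]

/-- Two-sided sandwich bound on `σ*² - σ̂²` in terms of the weighted nuclear norm
estimation error, under the noise-control event (i) and the KKT bound (ii). -/
theorem stmt_5 (n q K : ℕ) (hn : 0 < n) (hq : 0 < q) (p : Fin K → ℕ)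
    (Y : Matrix (Fin n) (Fin q) ℝ)
    (X : ∀ k, Matrix (Fin n) (Fin (p k)) ℝ)
    (Bstar Bhat : ∀ k, Matrix (Fin (p k)) (Fin q) ℝ)
    (lam t η : ℝ) (w : Fin K → ℝ)
    (hlam : 0 < lam) (ht : 0 < t) (hη : 0 < η) (hw : ∀ k, 0 < w k)
    (hE : ∀ k, opNorm ((X k)ᵀ * (Y - ∑ j, X j * Bstar j)) ≤ n * q * t * lam * w k / (1 + η))
    (hKKT : ∀ k, opNorm ((X k)ᵀ * (Y - ∑ j, X j * Bhat j)) ≤ lam * t * n * q * w k) :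
    -((2 + η) / (1 + η)) * t * lam * (∑ k, w k * nucNorm (Bhat k - Bstar k)) ≤
        (frobNorm (Y - ∑ k, X k * Bstar k)) ^ 2 / (n * q) -
          (frobNorm (Y - ∑ k, X k * Bhat k)) ^ 2 / (n * q) ∧
      (frobNorm (Y - ∑ k, X k * Bstar k)) ^ 2 / (n * q) -
          (frobNorm (Y - ∑ k, X k * Bhat k)) ^ 2 / (n * q) ≤
        (2 * t * lam / (1 + η)) * (∑ k, w k * nucNorm (Bhat k - Bstar k)) := by
  have h1η : (0:ℝ) < 1 + η := by linarith
  have hN : (0:ℝ) < (n:ℝ) * (q:ℝ) := by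
    have h1 : (0:ℝ) < (n:ℝ) := Nat.cast_pos.mpr hn
    have h2 : (0:ℝ) < (q:ℝ) := Nat.cast_pos.mpr hq
    positivity
  set Es : Matrix (Fin n) (Fin q) ℝ := Y - ∑ k, X k * Bstar k with hEsdef
  set Eh : Matrix (Fin n) (Fin q) ℝ := Y - ∑ k, X k * Bhat k with hEhdef
  set S : Matrix (Fin n) (Fin q) ℝ := ∑ k, X k * (Bhat k - Bstar k) with hSdef
  set C : ℝ := ∑ k, w k * nucNorm (Bhat k - Bstar k) with hCdef
  have hCk : ∀ k, 0 ≤ nucNorm (Bhat k - Bstar k) := fun k => nucNorm_nonneg _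
  have hSsub : Es - Eh = S := by
    rw [hEsdef, hEhdef, hSdef]
    simp only [Matrix.mul_sub, Finset.sum_sub_distrib]
    abel
  have hEh' : Eh = Es - S := by rw [← hSsub]; abel
  have hfs : (frobNorm Es) ^ 2 = frobInner Es Es :=
    Real.sq_sqrt (frobInner_self_nonneg Es)
  have hfh : (frobNorm Eh) ^ 2 = frobInner Eh Eh :=
    Real.sq_sqrt (frobInner_self_nonneg Eh)
  have hdec : ∀ (E : Matrix (Fin n) (Fin q) ℝ),
      frobInner E S = ∑ k, frobInner ((X k)ᵀ * E) (Bhat k - Bstar k) := by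
    intro E
    show (Eᵀ * S).trace = _
    rw [hSdef, Matrix.mul_sum, Matrix.trace_sum]
    refine Finset.sum_congr rfl fun k _ => ?_
    show (Eᵀ * (X k * (Bhat k - Bstar k))).trace
      = (((X k)ᵀ * E)ᵀ * (Bhat k - Bstar k)).trace
    rw [Matrix.transpose_mul, Matrix.transpose_transpose, Matrix.mul_assoc]
  have hbnd : ∀ (E : Matrix (Fin n) (Fin q) ℝ) (c : ℝ),
      (∀ k, opNorm ((X k)ᵀ * E) ≤ c * w k) →
      frobInner E S ≤ c * C ∧ -(c * C) ≤ frobInner E S := by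
    intro E c hc
    have key : ∀ k, frobInner ((X k)ᵀ * E) (Bhat k - Bstar k) ≤ c * (w k * nucNorm (Bhat k - Bstar k))
        ∧ -(c * (w k * nucNorm (Bhat k - Bstar k))) ≤ frobInner ((X k)ᵀ * E) (Bhat k - Bstar k) := by
      intro k
      have h1 := frobInner_le_opNorm_mul_nucNorm ((X k)ᵀ * E) (Bhat k - Bstar k)
      have h2 := neg_bound ((X k)ᵀ * E) (Bhat k - Bstar k)
      have h3 := mul_le_mul_of_nonneg_right (hc k) (hCk k)
      constructor
      · calc frobInner ((X k)ᵀ * E) (Bhat k - Bstar k)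
            ≤ opNorm ((X k)ᵀ * E) * nucNorm (Bhat k - Bstar k) := h1
          _ ≤ c * w k * nucNorm (Bhat k - Bstar k) := h3
          _ = c * (w k * nucNorm (Bhat k - Bstar k)) := by ring
      · have : -(c * (w k * nucNorm (Bhat k - Bstar k)))
            ≤ -(opNorm ((X k)ᵀ * E) * nucNorm (Bhat k - Bstar k)) := by
          rw [neg_le_neg_iff]
          calc opNorm ((X k)ᵀ * E) * nucNorm (Bhat k - Bstar k)
              ≤ c * w k * nucNorm (Bhat k - Bstar k) := h3
            _ = c * (w k * nucNorm (Bhat k - Bstar k)) := by ring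
        linarith
    constructor
    · rw [hdec E, hCdef, Finset.mul_sum]
      exact Finset.sum_le_sum fun k _ => (key k).1
    · rw [hdec E, hCdef, Finset.mul_sum, ← Finset.sum_neg_distrib]
      exact Finset.sum_le_sum fun k _ => (key k).2
  obtain ⟨hubEs, hlbEs⟩ := hbnd Es ((n:ℝ) * q * t * lam / (1 + η)) (fun k => by
    calc opNorm ((X k)ᵀ * Es) ≤ (n:ℝ) * q * t * lam * w k / (1 + η) := hE k
      _ = (n:ℝ) * q * t * lam / (1 + η) * w k := by ring)
  obtain ⟨hubEh, hlbEh⟩ := hbnd Eh (lam * t * (n:ℝ) * q) (fun k => hKKT k)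
  have hT : frobInner Es Es - frobInner Eh Eh = frobInner Es S + frobInner S Eh := by
    rw [← hSsub, frobInner_sub_right Es Es Eh, frobInner_sub_left Es Eh Eh]
    ring
  have hSEh : frobInner S Eh = frobInner Es S - frobInner S S := by
    rw [hEh', frobInner_sub_right S Es S, frobInner_comm S Es]
  have hEhS : frobInner Eh S = frobInner S Eh := frobInner_comm Eh S
  have hSS := frobInner_self_nonneg S
  have hgoal : (frobNorm Es) ^ 2 / ((n:ℝ) * q) - (frobNorm Eh) ^ 2 / ((n:ℝ) * q)
      = (frobInner Es Es - frobInner Eh Eh) / ((n:ℝ) * q) := by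
    rw [hfs, hfh, sub_div]
  constructor
  · rw [hgoal, le_div_iff₀ hN]
    have e1 : -((2 + η) / (1 + η)) * t * lam * C * ((n:ℝ) * q)
        = -((n:ℝ) * q * t * lam / (1 + η) * C) + -(lam * t * (n:ℝ) * q * C) := by
      field_simp
      ring
    rw [e1]
    linarith
  · rw [hgoal, div_le_iff₀ hN]
    have e2 : 2 * t * lam / (1 + η) * C * ((n:ℝ) * q)
        = 2 * ((n:ℝ) * q * t * lam / (1 + η) * C) := by
      field_simp
    rw [e2]
    linarith
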